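/- Let α ∈ ℝ, p_n ∈ ℤ, q_n ∈ ℤ_{>0} coprime with q_n → ∞, and suppose |α - p_n/q_n| ≤ τ/(q_n q_{n+1}) for all large n for some τ > 0 and q_{n+1} ≥ q_n. Then μ(α) ≥ 1 + limsup_{n→∞} (log q_{n+1})/(log q_n). -/

import Mathlib

noncomputable def irrationalityExponent (α : ℝ) : EReal :=
  sSup {x : EReal | ∃ μ : ℝ, x = (μ : EReal) ∧
    {r : ℚ | |α - (r : ℝ)| < (r.den : ℝ) ^ (-μ)}.Infinite}

open Filter Real in
lemma key_infinite (α : ℝ) (p q : ℕ → ℤ)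
    (hqpos : ∀ n, 0 < q n)
    (hcop : ∀ n, IsCoprime (p n) (q n))
    (hqinf : Filter.Tendsto (fun n => q n) Filter.atTop Filter.atTop)
    (τ : ℝ) (hτ : 0 < τ)
    (hmono : ∀ n, q n ≤ q (n + 1))
    (happrox : ∀ᶠ n in Filter.atTop,
      |α - (p n : ℝ) / (q n : ℝ)| ≤ τ / ((q n : ℝ) * (q (n + 1) : ℝ)))
    (x : ℝ)
    (hx : (x : EReal) < 1 + Filter.limsup
          (fun n => ((Real.log (q (n + 1) : ℝ) / Real.log (q n : ℝ) : ℝ) : EReal))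
          Filter.atTop) :
    {r : ℚ | |α - (r : ℝ)| < (r.den : ℝ) ^ (-x)}.Infinite := by
  set L := Filter.limsup
          (fun n => ((Real.log (q (n + 1) : ℝ) / Real.log (q n : ℝ) : ℝ) : EReal))
          Filter.atTop with hL
  obtain ⟨y, hxy, hyL⟩ := EReal.lt_iff_exists_real_btwn.mp hx
  have hxy' : x < y := by exact_mod_cast hxy
  have hyL' : ((y - 1 : ℝ) : EReal) < L := by
    by_contra hcon
    push_neg at hcon
    apply not_le.mpr hyL
    calc (1 : EReal) + L ≤ 1 + ((y - 1 : ℝ) : EReal) := add_le_add_right hcon 1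
    _ = ((1 + (y - 1) : ℝ) : EReal) := by norm_cast
    _ = ((y : ℝ) : EReal) := by norm_num
  have hfreq : ∃ᶠ n in atTop,
      (y - 1 : ℝ) < Real.log (q (n + 1) : ℝ) / Real.log (q n : ℝ) := by
    have := Filter.frequently_lt_of_lt_limsup (f := atTop)
      (u := fun n => ((Real.log (q (n + 1) : ℝ) / Real.log (q n : ℝ) : ℝ) : EReal)) ?_ hyL'
    · exact this.mono fun n h => EReal.coe_lt_coe_iff.mp h
    · isBoundedDefault
  have hqR : Tendsto (fun n => (q n : ℝ)) atTop atTop :=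
    tendsto_intCast_atTop_atTop.comp hqinf
  have hev1 : ∀ᶠ n in atTop, (2 : ℝ) ≤ (q n : ℝ) := hqR.eventually (eventually_ge_atTop 2)
  have hev2 : ∀ᶠ n in atTop, τ < (q n : ℝ) ^ (y - x) := by
    have : Tendsto (fun n => (q n : ℝ) ^ (y - x)) atTop atTop :=
      (tendsto_rpow_atTop (by linarith)).comp hqR
    exact this.eventually (eventually_gt_atTop τ)
  set S := {r : ℚ | |α - (r : ℝ)| < (r.den : ℝ) ^ (-x)} with hS
  have hkey : ∀ B : ℕ, ∃ r ∈ S, B < r.den := by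
    intro B
    have hevB : ∀ᶠ n in atTop, (B : ℤ) < q n := hqinf.eventually_gt_atTop (B : ℤ)
    obtain ⟨n, hlog, happ, h2, hτQ, hB⟩ :=
      (hfreq.and_eventually (happrox.and (hev1.and (hev2.and hevB)))).exists
    set Q1 := (q n : ℝ) with hQ1
    set Q2 := (q (n + 1) : ℝ) with hQ2
    have hQ1pos : 0 < Q1 := by linarith
    have hQ12 : Q1 ≤ Q2 := by show (q n : ℝ) ≤ (q (n+1) : ℝ); exact_mod_cast hmono n
    have hQ2pos : 0 < Q2 := lt_of_lt_of_le hQ1pos hQ12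
    have hlogpos : 0 < Real.log Q1 := Real.log_pos (by linarith)
    have h1 : (y - 1) * Real.log Q1 < Real.log Q2 := (lt_div_iff₀ hlogpos).mp hlog
    have h2' : Q1 ^ (y - 1) < Q2 := by
      rw [← Real.exp_log hQ2pos, Real.rpow_def_of_pos hQ1pos]
      exact Real.exp_lt_exp.mpr (by linarith [h1])
    have hden : 0 < Q1 * Q1 ^ (y - 1) := mul_pos hQ1pos (Real.rpow_pos_of_pos hQ1pos _)
    have hstep : τ / (Q1 * Q2) < τ / (Q1 * Q1 ^ (y - 1)) := by
      apply div_lt_div_of_pos_left hτ hden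
      exact mul_lt_mul_of_pos_left h2' hQ1pos
    have heq1 : Q1 * Q1 ^ (y - 1) = Q1 ^ y := by
      nth_rewrite 1 [← Real.rpow_one Q1]
      rw [← Real.rpow_add hQ1pos]
      norm_num
    have hstep2 : τ / Q1 ^ y < Q1 ^ (-x) := by
      have hpos : 0 < Q1 ^ y := Real.rpow_pos_of_pos hQ1pos _
      rw [div_lt_iff₀ hpos]
      calc τ < Q1 ^ (y - x) := hτQ
      _ = Q1 ^ (-x) * Q1 ^ y := by rw [← Real.rpow_add hQ1pos]; ring_nf
    set r : ℚ := (p n : ℚ) / (q n : ℚ) with hr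
    have hcop' : Nat.Coprime (p n).natAbs (q n).natAbs :=
      Int.isCoprime_iff_gcd_eq_one.mp (hcop n)
    have hdenr : ((r.den : ℤ)) = q n := Rat.den_div_eq_of_coprime (hqpos n) hcop'
    have hdenR : ((r.den : ℝ)) = Q1 := by
      rw [hQ1]; exact_mod_cast congrArg (fun z : ℤ => (z : ℝ)) hdenr
    have hcast : (r : ℝ) = (p n : ℝ) / (q n : ℝ) := by
      rw [hr]; push_cast; ring
    refine ⟨r, ?_, ?_⟩
    · show |α - (r : ℝ)| < (r.den : ℝ) ^ (-x)
      rw [hcast, hdenR]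
      calc |α - (p n : ℝ) / (q n : ℝ)| ≤ τ / (Q1 * Q2) := happ
      _ < τ / (Q1 * Q1 ^ (y - 1)) := hstep
      _ = τ / Q1 ^ y := by rw [heq1]
      _ < Q1 ^ (-x) := hstep2
    · have : (B : ℤ) < (r.den : ℤ) := by rw [hdenr]; exact hB
      exact_mod_cast this
  by_contra hfin
  rw [Set.not_infinite] at hfin
  obtain ⟨B, hB⟩ := (hfin.image Rat.den).bddAbove
  obtain ⟨r, hrS, hrB⟩ := hkey B
  exact absurd (hB (Set.mem_image_of_mem _ hrS)) (not_le.mpr hrB)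

theorem irrationality_exponent_lower_bound (α : ℝ) (p q : ℕ → ℤ)
    (hqpos : ∀ n, 0 < q n)
    (hcop : ∀ n, IsCoprime (p n) (q n))
    (hqinf : Filter.Tendsto (fun n => q n) Filter.atTop Filter.atTop)
    (τ : ℝ) (hτ : 0 < τ)
    (hmono : ∀ n, q n ≤ q (n + 1))
    (happrox : ∀ᶠ n in Filter.atTop,
      |α - (p n : ℝ) / (q n : ℝ)| ≤ τ / ((q n : ℝ) * (q (n + 1) : ℝ))) :
    irrationalityExponent α
      ≥ 1 + Filter.limsup
          (fun n => ((Real.log (q (n + 1) : ℝ) / Real.log (q n : ℝ) : ℝ) : EReal))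
          Filter.atTop := by
  rw [ge_iff_le]
  by_contra h
  push_neg at h
  obtain ⟨x, h1, h2⟩ := EReal.lt_iff_exists_real_btwn.mp h
  have hmem : (x : EReal) ∈ {x : EReal | ∃ μ : ℝ, x = (μ : EReal) ∧
      {r : ℚ | |α - (r : ℝ)| < (r.den : ℝ) ^ (-μ)}.Infinite} :=
    ⟨x, rfl, key_infinite α p q hqpos hcop hqinf τ hτ hmono happrox x h2⟩
  exact absurd (le_sSup hmem) (not_le.mpr h1)
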